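/- Let G be a star-like graph with m branches, with compact component K, and let J be the Jacobi operator on ℓ²(V; ℂ) determined by Jacobi data (a, b) on G. Then the set {δ_v : v ∈ K} is cyclic for J: the closure of the linear span of { Jᵏ δ_v : k ∈ ℕ ∪ {0}, v ∈ K } equals ℓ²(V; ℂ). -/

import Mathlib

/-- A star-like graph with `m` branches. -/
structure StarLike {V : Type*} (G : SimpleGraph V) (m : ℕ) where
  K : Finset V
  φ : Fin m → ℕ → V
  connected : G.Connected
  locFin : ∀ v : V, (G.neighborSet v).Finite
  φ_inj : ∀ i, Function.Injective (φ i)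
  cover : ∀ v : V, v ∈ K ∨ ∃ i n, v = φ i n
  branch_disjoint : ∀ i j, i ≠ j → ∀ p q, φ i p ≠ φ j q
  branch_inter_K : ∀ i n, φ i n ∈ K ↔ n = 0
  adj_branch : ∀ i (j : ℕ), 1 ≤ j → ∀ w, G.Adj (φ i j) w ↔ w = φ i (j - 1) ∨ w = φ i (j + 1)
  adj_base : ∀ i w, G.Adj (φ i 0) w → w ∈ K ∨ w = φ i 1

/-- Jacobi data on a graph `G`: bounded symmetric positive edge weights and a bounded
potential. -/
structure JacobiData {V : Type*} (G : SimpleGraph V) where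
  a : V → V → ℝ
  b : V → ℝ
  symm : ∀ u v, a u v = a v u
  pos : ∀ u v, G.Adj u v → 0 < a u v
  a_bdd : ∃ C, ∀ u v, G.Adj u v → |a u v| ≤ C
  b_bdd : ∃ C, ∀ v, |b v| ≤ C

/-- Let `G` be a star-like graph with `m` branches and compact component
`K`, and `J` the Jacobi operator on `ℓ²(V; ℂ)` determined by Jacobi data `(a, b)`. Then
`{δ_v : v ∈ K}` is a cyclic set for `J`: the closure of the span of
`{Jᵏ δ_v : k ≥ 0, v ∈ K}` is all of `ℓ²(V; ℂ)`. -/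
lemma single_app {V : Type*} [DecidableEq V] (u w : V) :
    (lp.single 2 u (1:ℂ) : ∀ _ : V, ℂ) w = if w = u then 1 else 0 := by
  by_cases h : w = u
  · subst h; simp [lp.single_apply_self]
  · simp [lp.single_apply_ne _ _ _ h, h]

theorem stmt_13 {V : Type*} [DecidableEq V] (G : SimpleGraph V) (m : ℕ)
    (S : StarLike G m) (D : JacobiData G)
    (J : lp (fun _ : V => ℂ) 2 →L[ℂ] lp (fun _ : V => ℂ) 2)
    (hJ : ∀ (ψ : lp (fun _ : V => ℂ) 2) (v : V),
      J ψ v = (∑ w ∈ (S.locFin v).toFinset, (D.a v w : ℂ) * ψ w) + (D.b v : ℂ) * ψ v) :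
    (Submodule.span ℂ
        {ψ : lp (fun _ : V => ℂ) 2 |
          ∃ (k : ℕ) (v : V), v ∈ S.K ∧ ψ = (J ^ k) (lp.single 2 v 1)}).topologicalClosure =
      ⊤ := by
  classical
  set s : Set (lp (fun _ : V => ℂ) 2) :=
    {ψ | ∃ (k : ℕ) (v : V), v ∈ S.K ∧ ψ = (J ^ k) (lp.single 2 v 1)} with hs
  set M := (Submodule.span ℂ s).topologicalClosure with hM
  have hmemN : ∀ u w : V, w ∈ (S.locFin u).toFinset ↔ G.Adj u w := by
    intro u w; simp [Set.Finite.mem_toFinset]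
  -- J maps the span into the span
  have hJspan : ∀ x ∈ Submodule.span ℂ s, J x ∈ Submodule.span ℂ s := by
    intro x hx
    induction hx using Submodule.span_induction with
    | mem x hx =>
      obtain ⟨k, v, hv, rfl⟩ := hx
      refine Submodule.subset_span ⟨k + 1, v, hv, ?_⟩
      rw [pow_succ']; rfl
    | zero => simp
    | add x y _ _ hx hy => simpa [map_add] using Submodule.add_mem _ hx hy
    | smul c x _ hx => simpa [map_smul] using Submodule.smul_mem _ c hx
  -- J maps M into M
  have hJM : ∀ x ∈ M, J x ∈ M := by
    intro x hx
    have hx' : x ∈ closure (Submodule.span ℂ s : Set (lp (fun _ : V => ℂ) 2)) := hx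
    have h1 : J x ∈ J '' closure (Submodule.span ℂ s : Set (lp (fun _ : V => ℂ) 2)) :=
      ⟨x, hx', rfl⟩
    have h2 := image_closure_subset_closure_image (f := J) J.continuous (s := (Submodule.span ℂ s : Set (lp (fun _ : V => ℂ) 2)))
    have h3 : closure (J '' (Submodule.span ℂ s : Set (lp (fun _ : V => ℂ) 2))) ⊆
        closure (Submodule.span ℂ s : Set (lp (fun _ : V => ℂ) 2)) := by
      apply closure_mono
      rintro _ ⟨y, hy, rfl⟩
      exact hJspan y hy
    exact h3 (h2 h1)
  -- the action of J on a delta function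
  have hsingle : ∀ u : V, J (lp.single 2 u 1) =
      (∑ w ∈ (S.locFin u).toFinset, (D.a u w : ℂ) • lp.single 2 w 1)
        + (D.b u : ℂ) • lp.single 2 u 1 := by
    intro u
    apply lp.ext
    funext v
    have hL := hJ (lp.single 2 u 1) v
    have hLc : (J (lp.single 2 u 1) : ∀ _ : V, ℂ) v
        = (if u ∈ (S.locFin v).toFinset then (D.a v u : ℂ) else 0)
          + (if v = u then (D.b v : ℂ) else 0) := by
      rw [hL]
      simp only [single_app, mul_ite, mul_one, mul_zero]
      rw [Finset.sum_ite_eq' ((S.locFin v).toFinset) u (fun w => (D.a v w : ℂ))]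
    have hRc : (((∑ w ∈ (S.locFin u).toFinset, (D.a u w : ℂ) • lp.single 2 w 1)
        + (D.b u : ℂ) • lp.single 2 u 1 : lp (fun _ : V => ℂ) 2) : ∀ _ : V, ℂ) v
        = (if v ∈ (S.locFin u).toFinset then (D.a u v : ℂ) else 0)
          + (if v = u then (D.b u : ℂ) else 0) := by
      rw [lp.coeFn_add, Pi.add_apply, lp.coeFn_sum, Finset.sum_apply, lp.coeFn_smul,
        Pi.smul_apply]
      simp only [lp.coeFn_smul, Pi.smul_apply, single_app, smul_eq_mul, mul_ite, mul_one,
        mul_zero]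
      rw [Finset.sum_ite_eq ((S.locFin u).toFinset) v (fun w => (D.a u w : ℂ))]
    rw [hLc, hRc]
    congr 1
    · by_cases h : G.Adj u v
      · rw [if_pos ((hmemN v u).mpr h.symm), if_pos ((hmemN u v).mpr h), D.symm]
      · rw [if_neg (fun hc => h ((hmemN u v).mp hc)),
          if_neg (fun hc => h (((hmemN v u).mp hc)).symm)]
    · by_cases h : v = u
      · subst h; rfl
      · rw [if_neg h, if_neg h]
  -- extraction lemma
  have hext : ∀ u t : V, G.Adj u t → lp.single 2 u (1:ℂ) ∈ M →
      (∀ w ∈ (S.locFin u).toFinset.erase t, lp.single 2 w (1:ℂ) ∈ M) →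
      lp.single 2 t (1:ℂ) ∈ M := by
    intro u t hadj hu hw
    have htmem : t ∈ (S.locFin u).toFinset := (hmemN u t).mpr hadj
    have hsum : (∑ w ∈ (S.locFin u).toFinset, (D.a u w : ℂ) • lp.single 2 w (1:ℂ))
        = (D.a u t : ℂ) • lp.single 2 t 1
          + ∑ w ∈ (S.locFin u).toFinset.erase t, (D.a u w : ℂ) • lp.single 2 w 1 :=
      (Finset.add_sum_erase _ _ htmem).symm
    have key : (D.a u t : ℂ) • lp.single 2 t (1:ℂ)
        = J (lp.single 2 u 1) - (D.b u : ℂ) • lp.single 2 u 1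
          - ∑ w ∈ (S.locFin u).toFinset.erase t, (D.a u w : ℂ) • lp.single 2 w 1 := by
      rw [hsingle u, hsum]; abel
    have hmem : (D.a u t : ℂ) • lp.single 2 t (1:ℂ) ∈ M := by
      rw [key]
      exact Submodule.sub_mem _ (Submodule.sub_mem _ (hJM _ hu) (Submodule.smul_mem _ _ hu))
        (Submodule.sum_mem _ fun w hwm => Submodule.smul_mem _ _ (hw w hwm))
    have ha : (D.a u t : ℂ) ≠ 0 := by
      exact_mod_cast (D.pos u t hadj).ne'
    have h2 := Submodule.smul_mem M (D.a u t : ℂ)⁻¹ hmem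
    rwa [smul_smul, inv_mul_cancel₀ ha, one_smul] at h2
  -- deltas at K vertices
  have hK : ∀ v ∈ S.K, lp.single 2 v (1:ℂ) ∈ M := by
    intro v hv
    apply Submodule.le_topologicalClosure
    exact Submodule.subset_span ⟨0, v, hv, by simp⟩
  -- deltas along branches
  have hbranch : ∀ i n, lp.single 2 (S.φ i n) (1:ℂ) ∈ M := by
    intro i n
    induction n using Nat.strong_induction_on with
    | _ n ih =>
      cases n with
      | zero => exact hK _ ((S.branch_inter_K i 0).mpr rfl)
      | succ k =>
        have hadj : G.Adj (S.φ i k) (S.φ i (k + 1)) := by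
          have := (S.adj_branch i (k + 1) (by omega) (S.φ i k)).mpr (Or.inl (by simp))
          exact this.symm
        apply hext (S.φ i k) (S.φ i (k + 1)) hadj (ih k (by omega))
        intro w hwm
        have hwne : w ≠ S.φ i (k + 1) := Finset.ne_of_mem_erase hwm
        have hwadj : G.Adj (S.φ i k) w :=
          (hmemN _ w).mp (Finset.mem_of_mem_erase hwm)
        cases k with
        | zero =>
          rcases S.adj_base i w hwadj with hK' | h1
          · exact hK _ hK'
          · exact absurd h1 hwne
        | succ l =>
          rcases (S.adj_branch i (l + 1) (by omega) w).mp hwadj with h | h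
          · have : w = S.φ i l := by simpa using h
            subst this
            exact ih l (by omega)
          · exact absurd h hwne
  -- all deltas
  have hall : ∀ u : V, lp.single 2 u (1:ℂ) ∈ M := by
    intro u
    rcases S.cover u with hu | ⟨i, n, rfl⟩
    · exact hK u hu
    · exact hbranch i n
  -- conclude by orthogonality
  rw [hM, Submodule.topologicalClosure_eq_top_iff, Submodule.eq_bot_iff]
  intro ψ hψ
  have hz : ∀ u : V, ψ u = 0 := by
    intro u
    have hu := hall u
    rw [hM, ← Submodule.orthogonal_orthogonal_eq_closure] at hu
    have h0 : (inner ℂ ψ (lp.single 2 u (1:ℂ)) : ℂ) = 0 :=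
      (Submodule.mem_orthogonal _ _).mp hu ψ hψ
    rw [lp.inner_single_right] at h0
    simpa [RCLike.inner_apply] using h0
  apply lp.ext
  funext u
  exact hz u
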